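/- arXiv:1011.3317 — 5 statements merged into one kernel-verified Lean document; each statement's English description precedes it below -/
import Mathlib

section
/- Let n ≥ 1. For every ω = [[p, q],[conj(q), conj(p)]] ∈ Sp(n,ℝ)_* and every W ∈ 𝔇_n, the matrix conj(q)·W + conj(p) is invertible and ω·W := (p·W + q)·(conj(q)·W + conj(p))^{-1} lies in 𝔇_n; moreover this defines a group action: I_{2n}·W = W and (ω·ω')·W = ω·(ω'·W) for all ω, ω' ∈ Sp(n,ℝ)_* and W ∈ 𝔇_n. -/
open Matrix
open scoped ComplexOrder

/-- Entrywise complex conjugate of a matrix. -/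
def cm {n : ℕ} (W : Matrix (Fin n) (Fin n) ℂ) : Matrix (Fin n) (Fin n) ℂ :=
  W.map (starRingEnd ℂ)

/-- The Siegel disk `𝔇_n`: symmetric complex matrices with `1 - W ⬝ conj W` positive definite. -/
def SiegelDisk (n : ℕ) : Set (Matrix (Fin n) (Fin n) ℂ) :=
  {W | W.IsSymm ∧ (1 - W * cm W).PosDef}

/-- The defining relations of `Sp(n,ℝ)_*` for the blocks `p`, `q` of
`ω = [[p, q],[conj q, conj p]]`. -/
def SpStarRel {n : ℕ} (p q : Matrix (Fin n) (Fin n) ℂ) : Prop :=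
  pᵀ * cm p - (cm q)ᵀ * q = 1 ∧ pᵀ * cm q = (cm q)ᵀ * p

/-- The action `ω·W = (p W + q)(conj q W + conj p)⁻¹` of `Sp(n,ℝ)_*` on the Siegel disk. -/
noncomputable def diskAct {n : ℕ} (p q W : Matrix (Fin n) (Fin n) ℂ) :
    Matrix (Fin n) (Fin n) ℂ :=
  (p * W + q) * (cm q * W + cm p)⁻¹

namespace SiegelAux

variable {n : ℕ}

lemma cm_mul (A B : Matrix (Fin n) (Fin n) ℂ) : cm (A * B) = cm A * cm B :=
  Matrix.map_mul

lemma cm_add (A B : Matrix (Fin n) (Fin n) ℂ) : cm (A + B) = cm A + cm B := by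
  ext i j; simp [cm]

lemma cm_sub (A B : Matrix (Fin n) (Fin n) ℂ) : cm (A - B) = cm A - cm B := by
  ext i j; simp [cm]

lemma cm_one : cm (1 : Matrix (Fin n) (Fin n) ℂ) = 1 :=
  Matrix.map_one _ (map_zero _) (map_one _)

lemma cm_zero : cm (0 : Matrix (Fin n) (Fin n) ℂ) = 0 := by
  ext i j; simp [cm]

lemma cm_cm (A : Matrix (Fin n) (Fin n) ℂ) : cm (cm A) = A := by
  ext i j; simp [cm]

lemma cm_transpose (A : Matrix (Fin n) (Fin n) ℂ) : cm Aᵀ = (cm A)ᵀ := by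
  ext i j; simp [cm]

lemma conjT_eq (A : Matrix (Fin n) (Fin n) ℂ) : Aᴴ = (cm A)ᵀ := by
  ext i j; rfl

lemma cm_conjT (A : Matrix (Fin n) (Fin n) ℂ) : (cm A)ᴴ = Aᵀ := by
  rw [conjT_eq, cm_cm]

lemma conjT_eq' (A : Matrix (Fin n) (Fin n) ℂ) : Aᴴ = cm Aᵀ := by
  rw [conjT_eq, cm_transpose]

/-- Positive definiteness is preserved under congruence by an invertible matrix. -/
lemma posDef_congr {A B : Matrix (Fin n) (Fin n) ℂ} (hA : A.PosDef) (hB : IsUnit B) :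
    (Bᴴ * A * B).PosDef := by
  exact hA.conjTranspose_mul_mul_same (Matrix.mulVec_injective_iff_isUnit.mpr hB)

/-- The main lemma: invertibility of the denominator and membership of the image. -/
lemma main {p q W : Matrix (Fin n) (Fin n) ℂ} (h : SpStarRel p q) (hW : W ∈ SiegelDisk n) :
    IsUnit (cm q * W + cm p) ∧ diskAct p q W ∈ SiegelDisk n := by
  obtain ⟨h1, h2⟩ := h
  obtain ⟨hWs, hWp⟩ := hW
  have hWt : Wᵀ = W := hWs
  set M : Matrix (Fin n) (Fin n) ℂ := cm q * W + cm p with hM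
  set N : Matrix (Fin n) (Fin n) ℂ := p * W + q with hN
  -- conjugated relations
  have h1c : (cm p)ᵀ * p - qᵀ * cm q = 1 := by
    have := congrArg cm h1
    simp only [cm_sub, cm_mul, cm_one, cm_transpose, cm_cm] at this
    exact this
  have h2c : (cm p)ᵀ * q = qᵀ * cm p := by
    have := congrArg cm h2
    simp only [cm_mul, cm_transpose, cm_cm] at this
    exact this
  have hMH : Mᴴ = Wᴴ * qᵀ + pᵀ := by
    rw [hM, conjTranspose_add, conjTranspose_mul, cm_conjT, cm_conjT]
  have hNH : Nᴴ = Wᴴ * (cm p)ᵀ + (cm q)ᵀ := by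
    rw [hN, conjTranspose_add, conjTranspose_mul, conjT_eq p, conjT_eq q]
  -- the key quadratic identity
  have key : Mᴴ * M - Nᴴ * N = 1 - Wᴴ * W := by
    have expand : Mᴴ * M - Nᴴ * N =
        Wᴴ * (qᵀ * cm q - (cm p)ᵀ * p) * W + Wᴴ * (qᵀ * cm p - (cm p)ᵀ * q)
          + (pᵀ * cm q - (cm q)ᵀ * p) * W + (pᵀ * cm p - (cm q)ᵀ * q) := by
      rw [hMH, hNH, hM, hN]; noncomm_ring
    have e1 : qᵀ * cm q - (cm p)ᵀ * p = -1 := by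
      rw [← neg_sub ((cm p)ᵀ * p), h1c]
    have e2 : qᵀ * cm p - (cm p)ᵀ * q = 0 := by rw [h2c, sub_self]
    have e3 : pᵀ * cm q - (cm q)ᵀ * p = 0 := by rw [h2, sub_self]
    rw [expand, e1, e2, e3, h1]
    noncomm_ring
  -- positivity of 1 - Wᴴ W
  have hWH : Wᴴ = cm W := by rw [conjT_eq', hWt]
  have hpos1 : (1 - Wᴴ * W).PosDef := by
    have : (1 - W * cm W)ᵀ = 1 - Wᴴ * W := by
      rw [transpose_sub, transpose_one, transpose_mul, ← cm_transpose, hWt, hWH]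
    rw [← this]
    exact hWp.transpose
  -- invertibility of M
  have hMM : (Mᴴ * M).PosDef := by
    have : Mᴴ * M = Nᴴ * N + (1 - Wᴴ * W) := by rw [← key]; abel
    rw [this]
    exact Matrix.PosDef.posSemidef_add (Matrix.posSemidef_conjTranspose_mul_self N) hpos1
  have hMunit : IsUnit M := by
    rw [Matrix.isUnit_iff_isUnit_det]
    have := hMM.isUnit
    rw [Matrix.isUnit_iff_isUnit_det, Matrix.det_mul] at this
    exact isUnit_of_mul_isUnit_right this
  have hMdet : IsUnit M.det := (Matrix.isUnit_iff_isUnit_det M).mp hMunit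
  have hMtdet : IsUnit Mᵀ.det := by rwa [Matrix.det_transpose]
  -- symmetry of N * M⁻¹
  have hsymm0 : Nᵀ * M = Mᵀ * N := by
    have expand : Nᵀ * M - Mᵀ * N =
        W * (pᵀ * cm q - (cm q)ᵀ * p) * W + W * (pᵀ * cm p - (cm q)ᵀ * q)
          + (qᵀ * cm q - (cm p)ᵀ * p) * W + (qᵀ * cm p - (cm p)ᵀ * q) := by
      rw [hM, hN, transpose_add, transpose_add, transpose_mul, transpose_mul, hWt]
      noncomm_ring
    have e1 : qᵀ * cm q - (cm p)ᵀ * p = -1 := by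
      rw [← neg_sub ((cm p)ᵀ * p), h1c]
    have hz : Nᵀ * M - Mᵀ * N = 0 := by
      rw [expand, e1, h1, h2c, sub_self, h2, sub_self]
      noncomm_ring
    exact sub_eq_zero.mp hz
  have hact : diskAct p q W = N * M⁻¹ := rfl
  have hW't : (N * M⁻¹)ᵀ = N * M⁻¹ := by
    rw [transpose_mul, Matrix.transpose_nonsing_inv]
    calc (Mᵀ)⁻¹ * Nᵀ = (Mᵀ)⁻¹ * (Nᵀ * M) * M⁻¹ := by
          rw [mul_assoc, mul_assoc, Matrix.mul_nonsing_inv _ hMdet, mul_one]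
      _ = (Mᵀ)⁻¹ * (Mᵀ * N) * M⁻¹ := by rw [hsymm0]
      _ = N * M⁻¹ := by rw [← mul_assoc, Matrix.nonsing_inv_mul _ hMtdet, one_mul]
  have hsymm : (N * M⁻¹).IsSymm := hW't
  refine ⟨hMunit, ?_⟩
  rw [hact]
  -- positive-definiteness of 1 - W' cm W'
  set W' : Matrix (Fin n) (Fin n) ℂ := N * M⁻¹ with hW'
  refine ⟨hsymm, ?_⟩
  have hW'H : W'ᴴ = cm W' := by rw [conjT_eq', hW't]
  have hpos2 : (1 - W'ᴴ * W').PosDef := by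
    have hinv : IsUnit (M⁻¹) := Matrix.isUnit_nonsing_inv_iff.mpr hMunit
    have hid : (M⁻¹)ᴴ * (Mᴴ * M) * M⁻¹ = 1 := by
      have h1' : (M⁻¹)ᴴ * Mᴴ = 1 := by
        rw [← conjTranspose_mul, Matrix.mul_nonsing_inv _ hMdet, conjTranspose_one]
      calc (M⁻¹)ᴴ * (Mᴴ * M) * M⁻¹ = ((M⁻¹)ᴴ * Mᴴ) * (M * M⁻¹) := by noncomm_ring
        _ = 1 := by rw [h1', Matrix.mul_nonsing_inv _ hMdet, one_mul]
    have hconj : 1 - W'ᴴ * W' = (M⁻¹)ᴴ * (1 - Wᴴ * W) * M⁻¹ := by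
      have : W'ᴴ * W' = (M⁻¹)ᴴ * (Nᴴ * N) * M⁻¹ := by
        rw [hW', conjTranspose_mul]; noncomm_ring
      rw [this, ← key, ← hid]; noncomm_ring
    rw [hconj]
    exact posDef_congr hpos1 hinv
  have heq : (1 - W'ᴴ * W')ᵀ = 1 - W' * cm W' := by
    rw [transpose_sub, transpose_one, transpose_mul, hW'H, ← cm_transpose, hW't]
  rw [← heq]
  exact hpos2.transpose

end SiegelAux

theorem stmt0 (n : ℕ) (hn : 1 ≤ n) :
    (∀ p q : Matrix (Fin n) (Fin n) ℂ, SpStarRel p q → ∀ W ∈ SiegelDisk n,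
        IsUnit (cm q * W + cm p) ∧ diskAct p q W ∈ SiegelDisk n)
    ∧ (∀ W ∈ SiegelDisk n, diskAct (1 : Matrix (Fin n) (Fin n) ℂ) 0 W = W)
    ∧ (∀ p q p' q' : Matrix (Fin n) (Fin n) ℂ, SpStarRel p q → SpStarRel p' q' →
        ∀ W ∈ SiegelDisk n,
          diskAct (p * p' + q * cm q') (p * q' + q * cm p') W
            = diskAct p q (diskAct p' q' W)) := by
  refine ⟨fun p q h W hW => SiegelAux.main h hW, ?_, ?_⟩
  · intro W hW
    simp [diskAct, SiegelAux.cm_one, SiegelAux.cm_zero]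
  · intro p q p' q' h h' W hW
    obtain ⟨hM'unit, hW'mem⟩ := SiegelAux.main h' hW
    set N' : Matrix (Fin n) (Fin n) ℂ := p' * W + q' with hN'
    set M' : Matrix (Fin n) (Fin n) ℂ := cm q' * W + cm p' with hM'
    have hM'det : IsUnit M'.det := (Matrix.isUnit_iff_isUnit_det M').mp hM'unit
    have hact' : diskAct p' q' W = N' * M'⁻¹ := rfl
    have hlhsN : (p * p' + q * cm q') * W + (p * q' + q * cm p') = p * N' + q * M' := by
      rw [hN', hM']; noncomm_ring
    have hlhsM : cm (p * q' + q * cm p') * W + cm (p * p' + q * cm q')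
        = cm q * N' + cm p * M' := by
      rw [SiegelAux.cm_add, SiegelAux.cm_add, SiegelAux.cm_mul, SiegelAux.cm_mul,
        SiegelAux.cm_mul, SiegelAux.cm_mul, SiegelAux.cm_cm, SiegelAux.cm_cm, hN', hM']
      noncomm_ring
    clear_value N' M'
    have hMM' : M' * M'⁻¹ = 1 := Matrix.mul_nonsing_inv _ hM'det
    have hnum : p * (N' * M'⁻¹) + q = (p * N' + q * M') * M'⁻¹ := by
      rw [add_mul, mul_assoc, mul_assoc, hMM', mul_one]
    have hden : cm q * (N' * M'⁻¹) + cm p = (cm q * N' + cm p * M') * M'⁻¹ := by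
      rw [add_mul, mul_assoc, mul_assoc, hMM', mul_one]
    rw [hact']
    unfold diskAct
    rw [hlhsN, hlhsM, hnum, hden, Matrix.mul_inv_rev,
      Matrix.nonsing_inv_nonsing_inv _ hM'det, mul_assoc (p * N' + q * M') M'⁻¹,
      ← mul_assoc M'⁻¹ M' ((cm q * N' + cm p * M')⁻¹),
      Matrix.nonsing_inv_mul _ hM'det, one_mul]
end

section
/- Let n ≥ 1. The action of Sp(n,ℝ)_* on the Siegel disk 𝔇_n is transitive: for every W ∈ 𝔇_n there exists ω = [[p, q],[conj(q), conj(p)]] ∈ Sp(n,ℝ)_* such that (p·0 + q)·(conj(q)·0 + conj(p))^{-1} = q·conj(p)^{-1} = W. -/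
open Matrix
open scoped ComplexOrder

lemma cm_cm {n : ℕ} (A : Matrix (Fin n) (Fin n) ℂ) : cm (cm A) = A := by
  ext i j; simp [cm]

lemma cm_mul {n : ℕ} (A B : Matrix (Fin n) (Fin n) ℂ) : cm (A * B) = cm A * cm B := by
  simp [cm, Matrix.map_mul]

lemma cm_one {n : ℕ} : cm (1 : Matrix (Fin n) (Fin n) ℂ) = 1 := by
  simp [cm]

lemma cm_sub {n : ℕ} (A B : Matrix (Fin n) (Fin n) ℂ) : cm (A - B) = cm A - cm B := by
  ext i j; simp [cm]

lemma cm_transpose {n : ℕ} (A : Matrix (Fin n) (Fin n) ℂ) : cm (Aᵀ) = (cm A)ᵀ := by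
  ext i j; simp [cm]

lemma cm_eq_transpose {n : ℕ} {A : Matrix (Fin n) (Fin n) ℂ} (h : A.IsHermitian) :
    cm A = Aᵀ := by
  ext i j
  have h' := congrFun (congrFun h.symm i) j
  rw [conjTranspose_apply] at h'
  simp only [cm, Matrix.map_apply, transpose_apply]
  rw [h']
  simp

lemma posdef_transpose {n : ℕ} {A : Matrix (Fin n) (Fin n) ℂ} (h : A.PosDef) :
    Aᵀ.PosDef := by
  exact h.transpose

/-- Transitivity of the `Sp(n,ℝ)_*` action: every `W ∈ 𝔇_n` is in the orbit of `0`,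
i.e. `W = (p·0 + q)(conj q·0 + conj p)⁻¹ = q (conj p)⁻¹` for some `ω ∈ Sp(n,ℝ)_*`. -/
theorem stmt1 (n : ℕ) (hn : 1 ≤ n) :
    ∀ W ∈ SiegelDisk n, ∃ p q : Matrix (Fin n) (Fin n) ℂ,
      SpStarRel p q ∧ IsUnit (cm p) ∧
      (p * 0 + q) * (cm q * 0 + cm p)⁻¹ = W ∧ q * (cm p)⁻¹ = W := by
  rintro W ⟨hWs, hWpd⟩
  have hWT : Wᵀ = W := hWs
  have hB : (1 - cm W * W).PosDef := by
    have h1 : cm (1 - W * cm W) = 1 - cm W * W := by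
      rw [cm_sub, cm_one, cm_mul, cm_cm]
    have h2 : cm (1 - W * cm W) = (1 - W * cm W)ᵀ := cm_eq_transpose hWpd.isHermitian
    rw [← h1, h2]
    exact posdef_transpose hWpd
  set B : Matrix (Fin n) (Fin n) ℂ := 1 - cm W * W with hBdef
  have hBinv : B⁻¹.PosDef := hB.inv
  set S : Matrix (Fin n) (Fin n) ℂ := (open scoped MatrixOrder in CFC.sqrt B⁻¹) with hSdef
  have hSherm : S.IsHermitian := (open scoped MatrixOrder in (CFC.sqrt_nonneg B⁻¹).posSemidef.1)
  have hSsq : S * S = B⁻¹ := (open scoped MatrixOrder in CFC.sqrt_mul_sqrt_self B⁻¹ hBinv.posSemidef.nonneg)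
  have hSunit : IsUnit S := by
    rw [Matrix.isUnit_iff_isUnit_det]
    have h : IsUnit (S.det * S.det) := by
      rw [← det_mul, hSsq]
      exact (Matrix.isUnit_iff_isUnit_det _).mp hBinv.isUnit
    exact isUnit_of_mul_isUnit_left h
  have hBdet : IsUnit B.det := (Matrix.isUnit_iff_isUnit_det B).mp hB.isUnit
  have hSdet : IsUnit S.det := (Matrix.isUnit_iff_isUnit_det S).mp hSunit
  have hBB : B * B⁻¹ = 1 := Matrix.mul_nonsing_inv B hBdet
  have hBB' : B⁻¹ * B = 1 := Matrix.nonsing_inv_mul B hBdet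
  have h1 : S * B⁻¹ = B⁻¹ * S := by rw [← hSsq, mul_assoc]
  have hcomm : B * S = S * B := by
    calc B * S = B * S * (B⁻¹ * B) := by rw [hBB', mul_one]
      _ = B * (S * B⁻¹) * B := by noncomm_ring
      _ = B * (B⁻¹ * S) * B := by rw [h1]
      _ = (B * B⁻¹) * (S * B) := by noncomm_ring
      _ = S * B := by rw [hBB, one_mul]
  have hSBS : S * B * S = 1 := by
    rw [← hcomm, mul_assoc, hSsq, hBB]
  have hcmS : cm S = Sᵀ := cm_eq_transpose hSherm
  have hcmWT : (cm W)ᵀ = cm W := by rw [← cm_transpose, hWT]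
  have hSS : S * S⁻¹ = 1 := Matrix.mul_nonsing_inv S hSdet
  refine ⟨cm S, W * S, ⟨?_, ?_⟩, ?_, ?_, ?_⟩
  · rw [cm_cm, hcmS, transpose_transpose, cm_mul, hcmS, transpose_mul, transpose_transpose, hcmWT]
    calc S * S - S * cm W * (W * S)
        = S * B * S := by rw [hBdef]; noncomm_ring
      _ = 1 := hSBS
  · rw [cm_mul, hcmS, transpose_transpose, transpose_mul, transpose_transpose, hcmWT, mul_assoc]
  · rw [cm_cm]; exact hSunit
  · rw [cm_cm, mul_zero, mul_zero, zero_add, zero_add, mul_assoc, hSS, mul_one]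
  · rw [cm_cm, mul_assoc, hSS, mul_one]
end

section
/- Let W ∈ 𝔇_n and Ω = i(I_n + W)(I_n − W)^{-1}. Then Im Ω = (I_n − W)^{-1}·(I_n − W·conj(W))·(I_n − conj(W))^{-1}. -/
open Matrix
open scoped ComplexOrder

lemma cm_conjTranspose {n : ℕ} {W : Matrix (Fin n) (Fin n) ℂ} (hs : W.IsSymm) :
    (cm W)ᴴ = W := by
  ext i j
  simp [cm, conjTranspose_apply]
  exact (congrFun (congrFun hs j) i).symm

lemma key_no_fixed {n : ℕ} {W : Matrix (Fin n) (Fin n) ℂ} (hW : W ∈ SiegelDisk n)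
    {u : Fin n → ℂ} (hu : cm W *ᵥ u = u) (hu0 : u ≠ 0) : False := by
  have hpd := hW.2
  have h0 := hpd.dotProduct_mulVec_pos hu0
  have hform : star u ⬝ᵥ ((1 - W * cm W) *ᵥ u) = 0 := by
    have hWu : star u ᵥ* W = star u := by
      have := congrArg star hu
      rwa [star_mulVec, cm_conjTranspose hW.1] at this
    rw [sub_mulVec, one_mulVec, dotProduct_sub, ← mulVec_mulVec, hu,
      dotProduct_mulVec, hWu, sub_self]
  rw [hform] at h0
  exact lt_irrefl 0 h0

lemma det_one_sub_cm {n : ℕ} {W : Matrix (Fin n) (Fin n) ℂ} (hW : W ∈ SiegelDisk n) :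
    IsUnit (1 - cm W).det := by
  by_contra h
  obtain ⟨v, hv0, hv⟩ := (Matrix.exists_mulVec_eq_zero_iff (M := (1 : Matrix (Fin n) (Fin n) ℂ) - cm W)).2
    (by simpa using h)
  rw [sub_mulVec, one_mulVec, sub_eq_zero] at hv
  exact key_no_fixed hW hv.symm hv0

lemma det_one_sub {n : ℕ} {W : Matrix (Fin n) (Fin n) ℂ} (hW : W ∈ SiegelDisk n) :
    IsUnit (1 - W).det := by
  by_contra h
  obtain ⟨v, hv0, hv⟩ := (Matrix.exists_mulVec_eq_zero_iff (M := (1 : Matrix (Fin n) (Fin n) ℂ) - W)).2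
    (by simpa using h)
  rw [sub_mulVec, one_mulVec, sub_eq_zero] at hv
  have hstar : cm W *ᵥ star v = star v := by
    ext i
    have := congrArg (fun w : Fin n → ℂ => star (w i)) hv
    simp only [Pi.star_apply, mulVec, dotProduct, cm, map_apply] at this ⊢
    rw [this, star_sum]
    exact Finset.sum_congr rfl fun j _ => by simp [mul_comm]
  exact key_no_fixed hW hstar (by simpa using hv0)

lemma cm_inv {n : ℕ} {A : Matrix (Fin n) (Fin n) ℂ} (h : IsUnit A.det) :
    cm A⁻¹ = (cm A)⁻¹ := by
  refine (Matrix.inv_eq_right_inv ?_).symm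
  rw [← cm_mul, Matrix.mul_nonsing_inv A h]
  simp [cm]

/-- For `W ∈ 𝔇_n` and `Ω = i(I+W)(I−W)⁻¹`, one has
`Im Ω = (Ω − conj Ω)/(2i) = (I−W)⁻¹ (I − W conj W) (I − conj W)⁻¹`. -/
theorem stmt6 (n : ℕ) (W : Matrix (Fin n) (Fin n) ℂ) (hW : W ∈ SiegelDisk n) :
    (2 * Complex.I)⁻¹ •
        (Complex.I • ((1 + W) * (1 - W)⁻¹) - cm (Complex.I • ((1 + W) * (1 - W)⁻¹)))
      = (1 - W)⁻¹ * (1 - W * cm W) * (1 - cm W)⁻¹ := by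
  have hA : IsUnit (1 - W).det := det_one_sub hW
  have hB : IsUnit (1 - cm W).det := det_one_sub_cm hW
  have hcmP : cm (Complex.I • ((1 + W) * (1 - W)⁻¹))
      = (-Complex.I) • ((1 + cm W) * (1 - cm W)⁻¹) := by
    have h1 : cm ((1 + W) * (1 - W)⁻¹) = (1 + cm W) * (1 - cm W)⁻¹ := by
      rw [cm_mul, cm_inv hA]
      congr 1 <;> simp [cm, Matrix.map_add, Matrix.map_sub, Matrix.map_one]
    have h2 : ∀ (M : Matrix (Fin n) (Fin n) ℂ), cm (Complex.I • M) = (-Complex.I) • cm M := by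
      intro M; ext i j; simp [cm]
    rw [h2, h1]
  rw [hcmP, neg_smul, sub_neg_eq_add, ← smul_add, smul_smul]
  have hconst : (2 * Complex.I)⁻¹ * Complex.I = (2 : ℂ)⁻¹ := by
    field_simp
  rw [hconst]
  -- cancel by multiplying with (1 - W) on left and (1 - cm W) on right
  haveI := (1 - W).invertibleOfIsUnitDet hA
  haveI := (1 - cm W).invertibleOfIsUnitDet hB
  have cancel : ∀ X Y : Matrix (Fin n) (Fin n) ℂ,
      (1 - W) * X * (1 - cm W) = (1 - W) * Y * (1 - cm W) → X = Y := by
    intro X Y h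
    have h1 := congrArg (fun Z => (1 - W)⁻¹ * Z * (1 - cm W)⁻¹) h
    simpa [Matrix.mul_assoc, Matrix.nonsing_inv_mul _ hA, Matrix.mul_nonsing_inv _ hB,
      Matrix.mul_nonsing_inv_cancel_left _ _ hA,
      Matrix.nonsing_inv_mul_cancel_right _ _ hB] using h1
  apply cancel
  have hcomm : (1 - W) * (1 + W) = (1 + W) * (1 - W) := by noncomm_ring
  have hcommB : (1 - cm W) * (1 + cm W) = (1 + cm W) * (1 - cm W) := by noncomm_ring
  rw [Matrix.mul_smul, Matrix.smul_mul, Matrix.mul_add, Matrix.add_mul]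
  rw [← Matrix.mul_assoc ((1:Matrix (Fin n) (Fin n) ℂ) - W) (1 + W) _]
  rw [hcomm, Matrix.mul_assoc (1 + W) (1 - W) _, Matrix.mul_nonsing_inv _ hA, Matrix.mul_one]
  rw [Matrix.mul_assoc ((1:Matrix (Fin n) (Fin n) ℂ) - W) ((1 + cm W) * (1 - cm W)⁻¹) _,
    Matrix.mul_assoc (1 + cm W) (1 - cm W)⁻¹ _, Matrix.nonsing_inv_mul _ hB, Matrix.mul_one]
  rw [Matrix.mul_assoc ((1:Matrix (Fin n) (Fin n) ℂ) - W)⁻¹ (1 - W * cm W) (1 - cm W)⁻¹,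
    Matrix.mul_nonsing_inv_cancel_left _ _ hA, Matrix.mul_assoc,
    Matrix.nonsing_inv_mul _ hB, Matrix.mul_one]
  have : (1 + W) * (1 - cm W) + (1 - W) * (1 + cm W) = (2 : ℂ) • (1 - W * cm W) := by
    have hsymm := hW.1
    rw [smul_sub]
    noncomm_ring
    simp [smul_smul, two_smul, two_mul]
  rw [this, smul_smul]
  norm_num
end

section
/- Let W ∈ 𝔇_n, z ∈ ℂⁿ a row vector, Ω = i(I_n + W)(I_n − W)^{-1}, ζ = 2i·z·(I_n − W)^{-1}, Y = Im Ω, and η = Im ζ. Then Y is invertible and η·Y^{-1}·ᵗη = 2·A(−W, z) + z·(I_n − W)^{-1}·ᵗz + conj(z)·(I_n − conj(W))^{-1}·ᵗconj(z), where −W ∈ 𝔇_n. -/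
open Matrix
open scoped ComplexOrder

/-- `A(W,z) = (conj z + ½ z conj W)(I − W conj W)⁻¹ ᵗz + ½ conj z (I − W conj W)⁻¹ W ᵗconj z`. -/
noncomputable def Afun {n : ℕ} (W : Matrix (Fin n) (Fin n) ℂ) (z : Fin n → ℂ) : ℂ :=
  ((star z + (1 / 2 : ℂ) • (z ᵥ* cm W)) ᵥ* (1 - W * cm W)⁻¹) ⬝ᵥ z
    + (1 / 2 : ℂ) * ((star z ᵥ* ((1 - W * cm W)⁻¹ * W)) ⬝ᵥ star z)

namespace StmtAux

variable {n : ℕ}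

lemma cm_one : cm (1 : Matrix (Fin n) (Fin n) ℂ) = 1 := by
  simp [cm, Matrix.map_one]

lemma cm_mul (M N : Matrix (Fin n) (Fin n) ℂ) : cm (M * N) = cm M * cm N :=
  Matrix.map_mul

lemma cm_add (M N : Matrix (Fin n) (Fin n) ℂ) : cm (M + N) = cm M + cm N := by
  ext i j; simp [cm]

lemma cm_sub (M N : Matrix (Fin n) (Fin n) ℂ) : cm (M - N) = cm M - cm N := by
  ext i j; simp [cm]

lemma cm_neg (M : Matrix (Fin n) (Fin n) ℂ) : cm (-M) = -cm M := by
  ext i j; simp [cm]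

lemma cm_smul (c : ℂ) (M : Matrix (Fin n) (Fin n) ℂ) :
    cm (c • M) = (starRingEnd ℂ c) • cm M := by
  ext i j; simp [cm]

lemma cm_transpose (M : Matrix (Fin n) (Fin n) ℂ) : (cm M)ᵀ = cm Mᵀ := by
  ext i j; simp [cm]

lemma star_vecMul' (z : Fin n → ℂ) (M : Matrix (Fin n) (Fin n) ℂ) :
    star (z ᵥ* M) = star z ᵥ* cm M := by
  ext j
  simp [Matrix.vecMul, dotProduct, cm, map_sum, Pi.star_apply, mul_comm]

lemma posdef_isUnit {M : Matrix (Fin n) (Fin n) ℂ} (h : M.PosDef) : IsUnit M := by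
  rw [Matrix.isUnit_iff_isUnit_det, isUnit_iff_ne_zero]
  intro hdet
  obtain ⟨v, hv, hMv⟩ := (Matrix.exists_mulVec_eq_zero_iff).2 hdet
  have := h.dotProduct_mulVec_pos hv
  rw [hMv] at this
  simp at this

lemma cm_mulVec_star (M : Matrix (Fin n) (Fin n) ℂ) (v : Fin n → ℂ) :
    cm M *ᵥ star v = star (M *ᵥ v) := by
  ext i
  simp [Matrix.mulVec, dotProduct, cm, map_sum, Pi.star_apply]

lemma unit_one_sub {W : Matrix (Fin n) (Fin n) ℂ} (hs : W.IsSymm)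
    (hpd : (1 - W * cm W).PosDef) : IsUnit (1 - W) := by
  rw [Matrix.isUnit_iff_isUnit_det, isUnit_iff_ne_zero]
  intro hdet
  obtain ⟨v, hv, hMv⟩ := (Matrix.exists_mulVec_eq_zero_iff).2 hdet
  have hWv : W *ᵥ v = v := by
    have : (1 : Matrix (Fin n) (Fin n) ℂ) *ᵥ v - W *ᵥ v = 0 := by
      rw [← Matrix.sub_mulVec]; exact hMv
    have h2 : v - W *ᵥ v = 0 := by simpa using this
    have := sub_eq_zero.mp h2
    exact this.symm
  have hu : star v ≠ 0 := by
    simpa [star_eq_zero] using hv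
  have hq := hpd.dotProduct_mulVec_pos hu
  have hcm : cm W *ᵥ star v = star v := by
    rw [cm_mulVec_star, hWv]
  rw [Matrix.sub_mulVec, Matrix.one_mulVec, ← Matrix.mulVec_mulVec, hcm] at hq
  have hvW : v ᵥ* W = v := by
    have : v ᵥ* W = Wᵀ *ᵥ v := by rw [Matrix.mulVec_transpose]
    rw [this, hs.eq, hWv]
  have : star (star v) ⬝ᵥ (star v - W *ᵥ star v) = 0 := by
    rw [star_star, dotProduct_sub, Matrix.dotProduct_mulVec, hvW, sub_self]
  rw [this] at hq
  exact lt_irrefl _ hq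

variable {n : ℕ}

lemma cancel {A B X : Matrix (Fin n) (Fin n) ℂ} (h : A * B = 1) :
    A * (B * X) = X := by rw [← mul_assoc, h, one_mul]

lemma sandwich {P C X A A' : Matrix (Fin n) (Fin n) ℂ}
    (hPC : P * C = 1) (hAA' : A * A' = 1) : P * (C * X * A) * A' = X := by
  have : P * (C * X * A) * A' = (P * C) * (X * (A * A')) := by noncomm_ring
  rw [this, hPC, hAA', one_mul, mul_one]

lemma bil (x y : Fin n → ℂ) (M N : Matrix (Fin n) (Fin n) ℂ) :
    (x ᵥ* M) ⬝ᵥ (y ᵥ* N) = (x ᵥ* (M * Nᵀ)) ⬝ᵥ y := by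
  rw [show y ᵥ* N = Nᵀ *ᵥ y from (Matrix.mulVec_transpose N y).symm,
    Matrix.dotProduct_mulVec, Matrix.vecMul_vecMul]

lemma flip (x y : Fin n → ℂ) (M : Matrix (Fin n) (Fin n) ℂ) :
    (x ᵥ* M) ⬝ᵥ y = (y ᵥ* Mᵀ) ⬝ᵥ x := by
  rw [dotProduct_comm, show x ᵥ* M = Mᵀ *ᵥ x from (Matrix.mulVec_transpose M x).symm,
    Matrix.dotProduct_mulVec]

end StmtAux

theorem stmt8 (n : ℕ) (W : Matrix (Fin n) (Fin n) ℂ) (hW : W ∈ SiegelDisk n)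
    (z : Fin n → ℂ) :
    -W ∈ SiegelDisk n ∧
    ∀ Ω ζ Y η, Ω = Complex.I • ((1 + W) * (1 - W)⁻¹) →
      ζ = (2 * Complex.I) • (z ᵥ* (1 - W)⁻¹) →
      Y = (2 * Complex.I)⁻¹ • (Ω - cm Ω) →
      η = (2 * Complex.I)⁻¹ • (ζ - star ζ) →
      IsUnit Y ∧
      (η ᵥ* Y⁻¹) ⬝ᵥ η
        = 2 * Afun (-W) z + (z ᵥ* (1 - W)⁻¹) ⬝ᵥ z
          + (star z ᵥ* (1 - cm W)⁻¹) ⬝ᵥ star z := by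
  obtain ⟨hs, hD⟩ := hW
  have hcmcm : cm (cm W) = W := by ext i j; simp [cm]
  have hcmT : (cm W)ᵀ = cm W := by rw [StmtAux.cm_transpose, hs.eq]
  have hDT : (1 - W * cm W)ᵀ = 1 - cm W * W := by
    rw [Matrix.transpose_sub, Matrix.transpose_one, Matrix.transpose_mul, hcmT, hs.eq]
  have hC : (1 - cm W * W).PosDef := hDT ▸ hD.transpose
  have hneg : -W ∈ SiegelDisk n := by
    constructor
    · show (-W)ᵀ = -W
      rw [Matrix.transpose_neg, hs.eq]
    · have h1 : (1 : Matrix (Fin n) (Fin n) ℂ) - (-W) * cm (-W) = 1 - W * cm W := by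
        rw [StmtAux.cm_neg]; noncomm_ring
      show (1 - (-W) * cm (-W)).PosDef
      rw [h1]; exact hD
  refine ⟨hneg, ?_⟩
  intro Ω ζ Y η hΩ hζ hY hη
  -- units
  have uA : IsUnit ((1 : Matrix (Fin n) (Fin n) ℂ) - W) := StmtAux.unit_one_sub hs hD
  have uB : IsUnit ((1 : Matrix (Fin n) (Fin n) ℂ) - cm W) := by
    refine StmtAux.unit_one_sub ?_ ?_
    · show (cm W)ᵀ = cm W; exact hcmT
    · rw [hcmcm]; exact hC
  have uC : IsUnit ((1 : Matrix (Fin n) (Fin n) ℂ) - cm W * W) := StmtAux.posdef_isUnit hC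
  have uD : IsUnit ((1 : Matrix (Fin n) (Fin n) ℂ) - W * cm W) := StmtAux.posdef_isUnit hD
  have dA := (Matrix.isUnit_iff_isUnit_det _).mp uA
  have dB := (Matrix.isUnit_iff_isUnit_det _).mp uB
  have dC := (Matrix.isUnit_iff_isUnit_det _).mp uC
  have dD := (Matrix.isUnit_iff_isUnit_det _).mp uD
  have hAA : ((1 : Matrix (Fin n) (Fin n) ℂ) - W) * (1 - W)⁻¹ = 1 := Matrix.mul_nonsing_inv _ dA
  have hA'A : ((1 : Matrix (Fin n) (Fin n) ℂ) - W)⁻¹ * (1 - W) = 1 := Matrix.nonsing_inv_mul _ dA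
  have hBB : ((1 : Matrix (Fin n) (Fin n) ℂ) - cm W) * (1 - cm W)⁻¹ = 1 := Matrix.mul_nonsing_inv _ dB
  have hB'B : ((1 : Matrix (Fin n) (Fin n) ℂ) - cm W)⁻¹ * (1 - cm W) = 1 := Matrix.nonsing_inv_mul _ dB
  have hCC : ((1 : Matrix (Fin n) (Fin n) ℂ) - cm W * W) * (1 - cm W * W)⁻¹ = 1 := Matrix.mul_nonsing_inv _ dC
  have hC'C : ((1 : Matrix (Fin n) (Fin n) ℂ) - cm W * W)⁻¹ * (1 - cm W * W) = 1 := Matrix.nonsing_inv_mul _ dC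
  have hDD : ((1 : Matrix (Fin n) (Fin n) ℂ) - W * cm W) * (1 - W * cm W)⁻¹ = 1 := Matrix.mul_nonsing_inv _ dD
  have hD'D : ((1 : Matrix (Fin n) (Fin n) ℂ) - W * cm W)⁻¹ * (1 - W * cm W) = 1 := Matrix.nonsing_inv_mul _ dD
  -- transposes
  have hAT : ((1 : Matrix (Fin n) (Fin n) ℂ) - W)ᵀ = 1 - W := by
    rw [Matrix.transpose_sub, Matrix.transpose_one, hs.eq]
  have hBT : ((1 : Matrix (Fin n) (Fin n) ℂ) - cm W)ᵀ = 1 - cm W := by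
    rw [Matrix.transpose_sub, Matrix.transpose_one, hcmT]
  have tA : (((1 : Matrix (Fin n) (Fin n) ℂ) - W)⁻¹)ᵀ = (1 - W)⁻¹ := by
    rw [Matrix.transpose_nonsing_inv, hAT]
  have tB : (((1 : Matrix (Fin n) (Fin n) ℂ) - cm W)⁻¹)ᵀ = (1 - cm W)⁻¹ := by
    rw [Matrix.transpose_nonsing_inv, hBT]
  have hCT : ((1 : Matrix (Fin n) (Fin n) ℂ) - cm W * W)ᵀ = 1 - W * cm W := by
    rw [Matrix.transpose_sub, Matrix.transpose_one, Matrix.transpose_mul, hcmT, hs.eq]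
  have tC : (((1 : Matrix (Fin n) (Fin n) ℂ) - cm W * W)⁻¹)ᵀ = (1 - W * cm W)⁻¹ := by
    rw [Matrix.transpose_nonsing_inv, hCT]
  -- cm of inverse
  have cmAinv : cm (((1 : Matrix (Fin n) (Fin n) ℂ) - W)⁻¹) = (1 - cm W)⁻¹ := by
    symm
    apply Matrix.inv_eq_right_inv
    rw [show (1 : Matrix (Fin n) (Fin n) ℂ) - cm W = cm (1 - W) from by
        rw [StmtAux.cm_sub, StmtAux.cm_one],
      ← StmtAux.cm_mul, hAA, StmtAux.cm_one]
  -- value of Y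
  have hYval : Y = (2:ℂ)⁻¹ • ((1 + W) * (1 - W)⁻¹ + (1 + cm W) * (1 - cm W)⁻¹) := by
    have hcmΩ : cm Ω = (-Complex.I) • ((1 + cm W) * (1 - cm W)⁻¹) := by
      rw [hΩ, StmtAux.cm_smul, StmtAux.cm_mul, StmtAux.cm_add, StmtAux.cm_one, cmAinv]
      norm_num
    rw [hY, hcmΩ, hΩ, neg_smul, sub_neg_eq_add, ← smul_add, smul_smul,
      show (2*Complex.I)⁻¹ * Complex.I = (2:ℂ)⁻¹ from by field_simp]
  -- commutation facts
  have hCWD : ((1 : Matrix (Fin n) (Fin n) ℂ) - cm W * W) * cm W = cm W * (1 - W * cm W) := by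
    noncomm_ring
  have hWCD : W * ((1 : Matrix (Fin n) (Fin n) ℂ) - cm W * W) = (1 - W * cm W) * W := by
    noncomm_ring
  have hAcmW : ((1 : Matrix (Fin n) (Fin n) ℂ) - W) * cm W
      = (1 - W * cm W) - (1 - cm W) := by noncomm_ring
  -- B Y A = C
  have hBYA : ((1 : Matrix (Fin n) (Fin n) ℂ) - cm W) * Y * (1 - W) = 1 - cm W * W := by
    rw [hYval, Matrix.mul_smul, Matrix.smul_mul]
    have expand : ((1 : Matrix (Fin n) (Fin n) ℂ) - cm W)
          * ((1 + W) * (1 - W)⁻¹ + (1 + cm W) * (1 - cm W)⁻¹) * (1 - W)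
        = (1 - cm W) * (1 + W) + (1 + cm W) * (1 - W) := by
      calc ((1 : Matrix (Fin n) (Fin n) ℂ) - cm W)
            * ((1 + W) * (1 - W)⁻¹ + (1 + cm W) * (1 - cm W)⁻¹) * (1 - W)
          = (1 - cm W) * (1 + W) * ((1 - W)⁻¹ * (1 - W))
            + ((1 - cm W) * (1 + cm W)) * ((1 - cm W)⁻¹ * (1 - W)) := by noncomm_ring
        _ = (1 - cm W) * (1 + W) * 1
            + ((1 + cm W) * (1 - cm W)) * ((1 - cm W)⁻¹ * (1 - W)) := by
            rw [hA'A, show ((1 : Matrix (Fin n) (Fin n) ℂ) - cm W) * (1 + cm W)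
              = (1 + cm W) * (1 - cm W) from by noncomm_ring]
        _ = (1 - cm W) * (1 + W) + (1 + cm W) * (((1 - cm W) * (1 - cm W)⁻¹) * (1 - W)) := by
            noncomm_ring
        _ = (1 - cm W) * (1 + W) + (1 + cm W) * (1 - W) := by rw [hBB, one_mul]
    rw [expand, show ((1 : Matrix (Fin n) (Fin n) ℂ) - cm W) * (1 + W) + (1 + cm W) * (1 - W)
        = (1 - cm W * W) + (1 - cm W * W) from by noncomm_ring,
      ← two_smul ℂ, smul_smul]
    norm_num
  have hY' : Y = (1 - cm W)⁻¹ * (1 - cm W * W) * (1 - W)⁻¹ := by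
    rw [← hBYA]
    exact (StmtAux.sandwich hB'B hAA).symm
  have hYinv : Y⁻¹ = (1 - W) * (1 - cm W * W)⁻¹ * (1 - cm W) := by
    apply Matrix.inv_eq_right_inv
    rw [hY']
    calc (1 - cm W)⁻¹ * (1 - cm W * W) * (1 - W)⁻¹ * ((1 - W) * (1 - cm W * W)⁻¹ * (1 - cm W))
        = (1 - cm W)⁻¹ * ((1 - cm W * W) * ((1 - W)⁻¹ * ((1 - W) * ((1 - cm W * W)⁻¹ * (1 - cm W))))) := by
          noncomm_ring
      _ = 1 := by rw [StmtAux.cancel hA'A, StmtAux.cancel hCC, hB'B]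
  have uY : IsUnit Y := by
    rw [Matrix.isUnit_iff_isUnit_det, hY', Matrix.det_mul, Matrix.det_mul,
      Matrix.det_nonsing_inv, Matrix.det_nonsing_inv]
    exact ((isUnit_ringInverse.mpr dB).mul dC).mul (isUnit_ringInverse.mpr dA)
  refine ⟨uY, ?_⟩
  -- value of η
  have h2I : (2 * Complex.I) ≠ 0 := by simp [Complex.I_ne_zero]
  have hstar : star ζ = (-(2 * Complex.I)) • (star z ᵥ* (1 - cm W)⁻¹) := by
    have hconj : (star (2 * Complex.I) : ℂ) = -(2 * Complex.I) := by
      simp [Complex.ext_iff]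
    rw [hζ, star_smul, StmtAux.star_vecMul', cmAinv, hconj]
  have hηval : η = z ᵥ* (1 - W)⁻¹ + star z ᵥ* (1 - cm W)⁻¹ := by
    rw [hη, hstar, hζ, neg_smul, sub_neg_eq_add, ← smul_add, smul_smul,
      inv_mul_cancel₀ h2I, one_smul]
  -- matrix identities
  have e1 : ((1 : Matrix (Fin n) (Fin n) ℂ) - cm W * W)
      * ((1 - W)⁻¹ - cm W * (1 - W * cm W)⁻¹) * (1 - W) = 1 - cm W := by
    calc ((1 : Matrix (Fin n) (Fin n) ℂ) - cm W * W)
          * ((1 - W)⁻¹ - cm W * (1 - W * cm W)⁻¹) * (1 - W)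
        = (1 - cm W * W) * ((1 - W)⁻¹ * (1 - W))
          - ((1 - cm W * W) * cm W) * ((1 - W * cm W)⁻¹ * (1 - W)) := by noncomm_ring
      _ = (1 - cm W * W) * 1
          - cm W * (((1 - W * cm W) * (1 - W * cm W)⁻¹) * (1 - W)) := by
          rw [hA'A, hCWD]; noncomm_ring
      _ = (1 - cm W * W) - cm W * (1 * (1 - W)) := by rw [hDD, mul_one]
      _ = 1 - cm W := by noncomm_ring
  have I1 : ((1 : Matrix (Fin n) (Fin n) ℂ) - cm W * W)⁻¹ * (1 - cm W) * (1 - W)⁻¹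
      = (1 - W)⁻¹ - cm W * (1 - W * cm W)⁻¹ := by
    rw [← e1]
    exact StmtAux.sandwich hC'C hAA
  have m0 : ((1 : Matrix (Fin n) (Fin n) ℂ) - W)⁻¹ * ((1 - W) * (1 - cm W * W)⁻¹ * (1 - cm W))
      = (1 - cm W * W)⁻¹ * (1 - cm W) := by
    rw [mul_assoc (1 - W) ((1 - cm W * W)⁻¹) (1 - cm W), StmtAux.cancel hA'A]
  have J11 : ((1 : Matrix (Fin n) (Fin n) ℂ) - W)⁻¹ * ((1 - W) * (1 - cm W * W)⁻¹ * (1 - cm W)) * (1 - W)⁻¹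
      = (1 - W)⁻¹ - cm W * (1 - W * cm W)⁻¹ := by
    rw [m0, I1]
  have J12 : ((1 : Matrix (Fin n) (Fin n) ℂ) - W)⁻¹ * ((1 - W) * (1 - cm W * W)⁻¹ * (1 - cm W)) * (1 - cm W)⁻¹
      = (1 - cm W * W)⁻¹ := by
    rw [m0, mul_assoc, hBB, mul_one]
  have J21 : ((1 : Matrix (Fin n) (Fin n) ℂ) - cm W)⁻¹ * ((1 - W) * (1 - cm W * W)⁻¹ * (1 - cm W)) * (1 - W)⁻¹
      = (1 - W * cm W)⁻¹ := by
    calc ((1 : Matrix (Fin n) (Fin n) ℂ) - cm W)⁻¹ * ((1 - W) * (1 - cm W * W)⁻¹ * (1 - cm W)) * (1 - W)⁻¹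
        = (1 - cm W)⁻¹ * ((1 - W) * ((1 - cm W * W)⁻¹ * (1 - cm W) * (1 - W)⁻¹)) := by noncomm_ring
      _ = (1 - cm W)⁻¹ * ((1 - W) * ((1 - W)⁻¹ - cm W * (1 - W * cm W)⁻¹)) := by rw [I1]
      _ = (1 - cm W)⁻¹ * ((1 - W) * (1 - W)⁻¹)
          - (1 - cm W)⁻¹ * (((1 - W) * cm W) * (1 - W * cm W)⁻¹) := by noncomm_ring
      _ = (1 - cm W)⁻¹ * 1
          - (1 - cm W)⁻¹ * (((1 - W * cm W) - (1 - cm W)) * (1 - W * cm W)⁻¹) := by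
          rw [hAA, hAcmW]
      _ = (1 - cm W)⁻¹ - (1 - cm W)⁻¹ * ((1 - W * cm W) * (1 - W * cm W)⁻¹)
          + ((1 - cm W)⁻¹ * (1 - cm W)) * (1 - W * cm W)⁻¹ := by noncomm_ring
      _ = (1 - cm W)⁻¹ - (1 - cm W)⁻¹ * 1 + 1 * (1 - W * cm W)⁻¹ := by rw [hDD, hB'B]
      _ = (1 - W * cm W)⁻¹ := by noncomm_ring
  have e4 : ((1 : Matrix (Fin n) (Fin n) ℂ) - cm W)
      * ((1 - cm W)⁻¹ - (1 - W * cm W)⁻¹ * W) * (1 - cm W * W) = 1 - W := by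
    calc ((1 : Matrix (Fin n) (Fin n) ℂ) - cm W)
          * ((1 - cm W)⁻¹ - (1 - W * cm W)⁻¹ * W) * (1 - cm W * W)
        = ((1 - cm W) * (1 - cm W)⁻¹) * (1 - cm W * W)
          - ((1 - cm W) * (1 - W * cm W)⁻¹) * (W * (1 - cm W * W)) := by noncomm_ring
      _ = 1 * (1 - cm W * W)
          - ((1 - cm W) * (1 - W * cm W)⁻¹) * ((1 - W * cm W) * W) := by rw [hBB, hWCD]
      _ = (1 - cm W * W)
          - (1 - cm W) * (((1 - W * cm W)⁻¹ * (1 - W * cm W)) * W) := by noncomm_ring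
      _ = (1 - cm W * W) - (1 - cm W) * (1 * W) := by rw [hD'D]
      _ = 1 - W := by noncomm_ring
  have J22 : ((1 : Matrix (Fin n) (Fin n) ℂ) - cm W)⁻¹ * ((1 - W) * (1 - cm W * W)⁻¹ * (1 - cm W)) * (1 - cm W)⁻¹
      = (1 - cm W)⁻¹ - (1 - W * cm W)⁻¹ * W := by
    calc ((1 : Matrix (Fin n) (Fin n) ℂ) - cm W)⁻¹ * ((1 - W) * (1 - cm W * W)⁻¹ * (1 - cm W)) * (1 - cm W)⁻¹
        = (1 - cm W)⁻¹ * ((1 - W) * (1 - cm W * W)⁻¹) * ((1 - cm W) * (1 - cm W)⁻¹) := by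
          noncomm_ring
      _ = (1 - cm W)⁻¹ * ((1 - W) * (1 - cm W * W)⁻¹) := by rw [hBB, mul_one]
      _ = (1 - cm W)⁻¹ - (1 - W * cm W)⁻¹ * W := by
          rw [← e4, ← mul_assoc]
          exact StmtAux.sandwich hB'B hCC
  -- value of Afun (-W) z
  have hAfun : Afun (-W) z = (star z ᵥ* (1 - W * cm W)⁻¹) ⬝ᵥ z
      - (1/2 : ℂ) * ((z ᵥ* (cm W * (1 - W * cm W)⁻¹)) ⬝ᵥ z)
      - (1/2 : ℂ) * ((star z ᵥ* ((1 - W * cm W)⁻¹ * W)) ⬝ᵥ star z) := by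
    unfold Afun
    rw [show (1 : Matrix (Fin n) (Fin n) ℂ) - (-W) * cm (-W) = 1 - W * cm W from by
        rw [StmtAux.cm_neg]; noncomm_ring,
      StmtAux.cm_neg]
    rw [Matrix.vecMul_neg, smul_neg, Matrix.add_vecMul, Matrix.neg_vecMul,
      Matrix.smul_vecMul, Matrix.vecMul_vecMul, add_dotProduct,
      neg_dotProduct, smul_dotProduct, mul_neg, Matrix.vecMul_neg,
      neg_dotProduct, mul_neg, smul_eq_mul]
    ring
  -- final computation
  rw [hηval, hYinv, hAfun]
  rw [Matrix.add_vecMul, Matrix.vecMul_vecMul, Matrix.vecMul_vecMul,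
    add_dotProduct, dotProduct_add, dotProduct_add]
  rw [StmtAux.bil, StmtAux.bil, StmtAux.bil, StmtAux.bil, tA, tB, J11, J12, J21, J22]
  rw [StmtAux.flip z (star z) ((1 - cm W * W)⁻¹), tC]
  rw [Matrix.vecMul_sub, sub_dotProduct, Matrix.vecMul_sub, sub_dotProduct]
  ring
end

section
/- For every W ∈ 𝔇_n, ∫_{ℂⁿ} exp(−conj(Z)·ᵗZ − ½·(Z·conj(W)·ᵗZ + conj(Z)·W·ᵗconj(Z))) ∏_{i=1}^n d(Re Z_i)·d(Im Z_i) = πⁿ·det(I_n − W·conj(W))^{-1/2}, where the square root is the positive square root of the positive real number det(I_n − W·conj(W)). -/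
open Matrix MeasureTheory
open scoped ComplexOrder Real

/-- The Gaussian integral of `exp (-⟨x, M x⟩)` for a positive definite real matrix `M`. -/
lemma gauss_int {ι : Type*} [Fintype ι] [DecidableEq ι] (M : Matrix ι ι ℝ) (hM : M.PosDef) :
    ∫ x : ι → ℝ, Real.exp (-(x ⬝ᵥ M *ᵥ x)) =
      Real.sqrt π ^ (Fintype.card ι) / Real.sqrt M.det := by
  have hps := hM.posSemidef
  set S := (open scoped MatrixOrder in CFC.sqrt M) with hSdef
  have hS2 : S * S = M := by
    open scoped MatrixOrder in exact CFC.sqrt_mul_sqrt_self M hps.nonneg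
  have hSh : Sᵀ = S := by
    have := (open scoped MatrixOrder in (CFC.sqrt_nonneg M).posSemidef).1
    rwa [IsHermitian, conjTranspose_eq_transpose_of_trivial] at this
  have hdet : S.det * S.det = M.det := by rw [← det_mul, hS2]
  have hMdet : 0 < M.det := hM.det_pos
  have hSdet : S.det ≠ 0 := by
    intro h; rw [h, mul_zero] at hdet; exact hMdet.ne' hdet.symm
  have key : ∀ x : ι → ℝ, x ⬝ᵥ M *ᵥ x = (S *ᵥ x) ⬝ᵥ (S *ᵥ x) := by
    intro x
    rw [← hS2, ← mulVec_mulVec, dotProduct_mulVec, ← mulVec_transpose, hSh]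
  have hmap : Measure.map (Matrix.toLin' S) volume
      = ENNReal.ofReal |S.det⁻¹| • volume := Real.map_matrix_volume_pi_eq_smul_volume_pi hSdet
  have hcont : Continuous fun y : ι → ℝ => Real.exp (-(y ⬝ᵥ y)) := by
    continuity
  calc ∫ x : ι → ℝ, Real.exp (-(x ⬝ᵥ M *ᵥ x))
      = ∫ x : ι → ℝ, Real.exp (-((Matrix.toLin' S x) ⬝ᵥ (Matrix.toLin' S x))) := by
        simp_rw [key, Matrix.toLin'_apply]
    _ = ∫ y, Real.exp (-(y ⬝ᵥ y)) ∂(Measure.map (Matrix.toLin' S) volume) := by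
        rw [integral_map]
        · exact (Matrix.toLin' S).continuous_of_finiteDimensional.aemeasurable
        · exact hcont.aestronglyMeasurable
    _ = |S.det⁻¹| * ∫ y : ι → ℝ, Real.exp (-(y ⬝ᵥ y)) := by
        rw [hmap, integral_smul_measure, ENNReal.toReal_ofReal (abs_nonneg _), smul_eq_mul]
    _ = |S.det⁻¹| * Real.sqrt π ^ (Fintype.card ι) := by
        congr 1
        have : ∀ y : ι → ℝ, Real.exp (-(y ⬝ᵥ y)) = ∏ i, Real.exp (-(y i * y i)) := by
          intro y
          rw [← Real.exp_sum]
          congr 1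
          rw [dotProduct, ← Finset.sum_neg_distrib]
        simp_rw [this]
        rw [MeasureTheory.integral_fintype_prod_volume_eq_pow (ι := ι) (fun t : ℝ => Real.exp (-(t * t)))]
        congr 1
        have h1 : ∀ t : ℝ, -(t * t) = -1 * t ^ 2 := by intro t; ring
        simp_rw [h1, integral_gaussian, div_one]
    _ = Real.sqrt π ^ (Fintype.card ι) / Real.sqrt M.det := by
        rw [← hdet, Real.sqrt_mul_self_eq_abs, abs_inv]
        rw [div_eq_inv_mul]

/-- The key determinant identity for block matrices. -/
lemma det_blocks {n : ℕ} (A B : Matrix (Fin n) (Fin n) ℂ) :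
    (fromBlocks (1 + A) B B (1 - A)).det
      = (1 - (A + Complex.I • B) * (A - Complex.I • B)).det := by
  set V : Matrix (Fin n ⊕ Fin n) (Fin n ⊕ Fin n) ℂ :=
    fromBlocks 1 1 (Complex.I • 1) (-(Complex.I) • 1) with hV
  set N : Matrix (Fin n ⊕ Fin n) (Fin n ⊕ Fin n) ℂ :=
    fromBlocks 1 (A - Complex.I • B) (A + Complex.I • B) 1 with hN
  have e11 : (1 + A) * 1 + B * (Complex.I • 1)
      = 1 * 1 + 1 * (A + Complex.I • B) := by
    simp [Matrix.mul_smul]; abel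
  have e12 : (1 + A) * 1 + B * (-(Complex.I) • 1)
      = 1 * (A - Complex.I • B) + 1 * 1 := by
    simp [Matrix.mul_smul]; abel
  have e21 : B * 1 + (1 - A) * (Complex.I • 1)
      = Complex.I • 1 * 1 + -(Complex.I) • 1 * (A + Complex.I • B) := by
    simp [Matrix.mul_smul, Matrix.smul_mul, smul_smul, Complex.I_mul_I, smul_add, sub_smul]
    module
  have e22 : B * 1 + (1 - A) * (-(Complex.I) • 1)
      = Complex.I • 1 * (A - Complex.I • B) + -(Complex.I) • 1 * 1 := by
    simp [Matrix.mul_smul, Matrix.smul_mul, smul_smul, Complex.I_mul_I, smul_sub, sub_smul]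
    module
  have hMV : fromBlocks (1 + A) B B (1 - A) * V = V * N := by
    rw [hV, hN, fromBlocks_multiply, fromBlocks_multiply, e11, e12, e21, e22]
  have hdetV : V.det = (-2 * Complex.I) ^ n := by
    rw [hV, det_fromBlocks_one₁₁]
    have : -Complex.I • (1 : Matrix (Fin n) (Fin n) ℂ) - Complex.I • 1 * 1
        = (-2 * Complex.I) • 1 := by
      rw [Matrix.mul_one, ← sub_smul]; congr 1; ring
    rw [this, Matrix.det_smul, det_one, mul_one, Fintype.card_fin]
  have hdetVne : V.det ≠ 0 := by
    rw [hdetV]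
    exact pow_ne_zero _ (by simp [Complex.ext_iff])
  have h := congrArg Matrix.det hMV
  rw [det_mul, det_mul, mul_comm (fromBlocks (1 + A) B B (1 - A)).det] at h
  have hdetMN := mul_left_cancel₀ hdetVne h
  rw [hdetMN, hN, det_fromBlocks_one₁₁]

/-- The Gaussian integral
`∫_{ℂⁿ} exp(−conj Z ᵗZ − ½(Z conj W ᵗZ + conj Z W ᵗconj Z)) ∏ dRe Z_i dIm Z_i
  = πⁿ det(I − W conj W)^{-1/2}`,
the square root being the positive square root of the positive real
`det(I − W conj W)`. -/
theorem stmt11 (n : ℕ) (W : Matrix (Fin n) (Fin n) ℂ) (hW : W ∈ SiegelDisk n) :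
    ∫ Z : Fin n → ℂ,
        Complex.exp (-(star Z ⬝ᵥ Z)
          - (1 / 2 : ℂ) * ((Z ᵥ* cm W) ⬝ᵥ Z + (star Z ᵥ* W) ⬝ᵥ star Z))
      = (π : ℂ) ^ n / (Real.sqrt ((1 - W * cm W).det.re) : ℂ) := by
  classical
  obtain ⟨hsymm, hpos⟩ := hW
  have hcm : cm W = W.map (starRingEnd ℂ) := rfl
  rw [hcm]
  rw [hcm] at hpos
  -- real and imaginary parts of W
  set u : Matrix (Fin n) (Fin n) ℝ := Matrix.of fun i j => (W i j).re with hu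
  set v : Matrix (Fin n) (Fin n) ℝ := Matrix.of fun i j => (W i j).im with hv
  set Mr : Matrix (Fin n ⊕ Fin n) (Fin n ⊕ Fin n) ℝ := fromBlocks (1 + u) v v (1 - u) with hMr
  -- Step A : determinant identity
  have hdetA : (Mr.det : ℂ) = (1 - W * W.map (starRingEnd ℂ)).det := by
    set A' : Matrix (Fin n) (Fin n) ℂ := u.map Complex.ofRealHom with hA'
    set B' : Matrix (Fin n) (Fin n) ℂ := v.map Complex.ofRealHom with hB'
    have h1 : ((fromBlocks (1 + u) v v (1 - u)).det : ℂ)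
        = (fromBlocks (1 + A') B' B' (1 - A')).det := by
      rw [show ((fromBlocks (1 + u) v v (1 - u)).det : ℂ)
        = Complex.ofRealHom (fromBlocks (1 + u) v v (1 - u)).det from rfl,
        RingHom.map_det Complex.ofRealHom]
      congr 1
      ext p q
      cases p <;> cases q <;>
        simp [hA', hB', Matrix.map_apply, Matrix.one_apply, apply_ite]
    have h2 : A' + Complex.I • B' = W := by
      ext i j
      simp [hA', hB', hu, hv, Matrix.map_apply, Complex.ext_iff]
    have h3 : A' - Complex.I • B' = W.map (starRingEnd ℂ) := by
      ext i j
      simp [hA', hB', hu, hv, Matrix.map_apply, Complex.ext_iff]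
    rw [hMr, h1, det_blocks, h2, h3]
  have hdetre : Mr.det = (1 - W * W.map (starRingEnd ℂ)).det.re := by
    rw [← hdetA, Complex.ofReal_re]
  -- Step B : pointwise identity for the integrand
  have hexp : ∀ Z : Fin n → ℂ,
      Complex.exp (-(star Z ⬝ᵥ Z)
          - (1 / 2 : ℂ) * ((Z ᵥ* W.map (starRingEnd ℂ)) ⬝ᵥ Z + (star Z ᵥ* W) ⬝ᵥ star Z))
        = ((Real.exp (-((star Z ⬝ᵥ Z).re + ((Z ᵥ* W.map (starRingEnd ℂ)) ⬝ᵥ Z).re)) : ℝ) : ℂ) := by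
    intro Z
    have h1 : star Z ⬝ᵥ Z = (((star Z ⬝ᵥ Z).re : ℝ) : ℂ) := by
      have him : (star Z ⬝ᵥ Z).im = 0 := by
        simp [dotProduct, Complex.im_sum, Complex.mul_im, mul_comm]
      apply Complex.ext <;> simp [him]
    have h2 : (star Z ᵥ* W) ⬝ᵥ star Z = starRingEnd ℂ ((Z ᵥ* W.map (starRingEnd ℂ)) ⬝ᵥ Z) := by
      simp only [dotProduct, vecMul, map_sum, _root_.map_mul, Matrix.map_apply, Pi.star_apply,
        RingHom.coe_coe, starRingEnd_self_apply]
      simp [Finset.sum_mul, _root_.map_sum, _root_.map_mul]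
    rw [h2, show (Z ᵥ* W.map (starRingEnd ℂ)) ⬝ᵥ Z
        + starRingEnd ℂ ((Z ᵥ* W.map (starRingEnd ℂ)) ⬝ᵥ Z)
        = ((2 * ((Z ᵥ* W.map (starRingEnd ℂ)) ⬝ᵥ Z).re : ℝ) : ℂ) from Complex.add_conj _]
    conv_lhs => rw [h1]
    rw [show -(((star Z ⬝ᵥ Z).re : ℝ) : ℂ)
        - (1 / 2 : ℂ) * ((2 * ((Z ᵥ* W.map (starRingEnd ℂ)) ⬝ᵥ Z).re : ℝ) : ℂ)
        = ((-((star Z ⬝ᵥ Z).re + ((Z ᵥ* W.map (starRingEnd ℂ)) ⬝ᵥ Z).re) : ℝ) : ℂ) from by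
          push_cast; ring,
      ← Complex.ofReal_exp]
  -- Step C : the measure-preserving equivalence
  set φe : ((Fin n ⊕ Fin n) → ℝ) ≃ᵐ (Fin n → ℂ) :=
    (MeasurableEquiv.sumPiEquivProdPi (fun _ : Fin n ⊕ Fin n => ℝ)).trans
      ((MeasurableEquiv.arrowProdEquivProdArrow ℝ ℝ (Fin n)).symm.trans
        (MeasurableEquiv.piCongrRight fun _ : Fin n => Complex.measurableEquivRealProd.symm))
    with hφe
  have hφ : MeasurePreserving φe := by
    have m1 := MeasureTheory.volume_measurePreserving_sumPiEquivProdPi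
      (fun _ : Fin n ⊕ Fin n => ℝ)
    have m2 := MeasurePreserving.symm _
      (MeasureTheory.volume_measurePreserving_arrowProdEquivProdArrow ℝ ℝ (Fin n))
    have m3 : MeasurePreserving
        (MeasurableEquiv.piCongrRight fun _ : Fin n => Complex.measurableEquivRealProd.symm) :=
      MeasureTheory.volume_preserving_pi fun _ =>
        (Complex.volume_preserving_equiv_real_prod).symm _
    exact ((m3.comp m2).comp m1 : _)
  have hφapp : ∀ (x : (Fin n ⊕ Fin n) → ℝ) (i : Fin n),
      φe x i = Complex.mk (x (Sum.inl i)) (x (Sum.inr i)) := fun x i => rfl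
  -- Step D : the quadratic form identity
  have hq : ∀ x : (Fin n ⊕ Fin n) → ℝ,
      (star (φe x) ⬝ᵥ (φe x)).re + (((φe x) ᵥ* W.map (starRingEnd ℂ)) ⬝ᵥ (φe x)).re
        = x ⬝ᵥ Mr *ᵥ x := by
    intro x
    have hZfun : φe x = fun i => (⟨x (Sum.inl i), x (Sum.inr i)⟩ : ℂ) := funext fun i => rfl
    rw [hZfun]
    set Z : Fin n → ℂ := fun i => (⟨x (Sum.inl i), x (Sum.inr i)⟩ : ℂ) with hZ
    set a : Fin n → ℝ := fun i => x (Sum.inl i) with ha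
    set b : Fin n → ℝ := fun i => x (Sum.inr i) with hb
    set F : Fin n → Fin n → ℝ := fun i j =>
      (a i * a j - b i * b j) * u i j + (a i * b j + b i * a j) * v i j with hF
    have step1 : (star Z ⬝ᵥ Z).re = ∑ i, (a i * a i + b i * b i) := by
      simp [dotProduct, Complex.re_sum, Complex.mul_re, hZ, ha, hb]
    have step2 : ((Z ᵥ* W.map (starRingEnd ℂ)) ⬝ᵥ Z).re = ∑ i, ∑ j, F i j := by
      have e1 : ((Z ᵥ* W.map (starRingEnd ℂ)) ⬝ᵥ Z).re
          = ∑ j, ∑ i, (Z i * (starRingEnd ℂ) (W i j) * Z j).re := by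
        simp [dotProduct, vecMul, Finset.sum_mul, Complex.re_sum, Matrix.map_apply]
      rw [e1, Finset.sum_comm]
      refine Finset.sum_congr rfl fun i _ => Finset.sum_congr rfl fun j _ => ?_
      simp only [hF, hZ, hu, hv, Complex.mul_re, Complex.mul_im, Complex.conj_re, Complex.conj_im,
        Matrix.of_apply]
      ring
    have hMr1 : (fromBlocks (1 + u) v v (1 - u) : Matrix (Fin n ⊕ Fin n) (Fin n ⊕ Fin n) ℝ)
        = 1 + fromBlocks u v v (-u) := by
      ext p q
      cases p <;> cases q <;> simp [Matrix.one_apply, sub_eq_add_neg]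
    have step3a : x ⬝ᵥ x = ∑ i, (a i * a i + b i * b i) := by
      simp [dotProduct, Fintype.sum_sum_type, ha, hb, Finset.sum_add_distrib]
    have step3b : x ⬝ᵥ (fromBlocks u v v (-u) *ᵥ x) = ∑ i, ∑ j, F i j := by
      simp only [dotProduct, mulVec, Fintype.sum_sum_type, fromBlocks_apply₁₁,
        fromBlocks_apply₁₂, fromBlocks_apply₂₁, fromBlocks_apply₂₂, neg_apply]
      rw [← Finset.sum_add_distrib]
      refine Finset.sum_congr rfl fun i _ => ?_
      rw [mul_add, mul_add, Finset.mul_sum, Finset.mul_sum, Finset.mul_sum, Finset.mul_sum,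
        add_add_add_comm, ← Finset.sum_add_distrib, ← Finset.sum_add_distrib,
        ← Finset.sum_add_distrib]
      refine Finset.sum_congr rfl fun j _ => ?_
      simp only [hF, hu, hv, ha, hb, Matrix.of_apply, Matrix.neg_apply]
      ring
    rw [step1, step2, hMr, hMr1, add_mulVec, one_mulVec, dotProduct_add, step3a, step3b]
  -- Step E : positive definiteness
  have hqpos : ∀ Z : Fin n → ℂ, Z ≠ 0 →
      0 < (star Z ⬝ᵥ Z).re + ((Z ᵥ* W.map (starRingEnd ℂ)) ⬝ᵥ Z).re := by
    intro Z hZ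
    set cW := W.map (starRingEnd ℂ) with hcW
    have hherm : cWᴴ = W := by
      ext i j
      simp only [hcW, conjTranspose_apply, Matrix.map_apply, RingHom.coe_coe,
        starRingEnd_self_apply, RCLike.star_def, Complex.conj_conj]
      rw [show W j i = Wᵀ i j from rfl, hsymm]
    set toE : (Fin n → ℂ) → EuclideanSpace ℂ (Fin n) :=
      fun y => (WithLp.equiv 2 (Fin n → ℂ)).symm y with htoE
    set Z' := toE Z with hZ'
    set Wv : Fin n → ℂ := W *ᵥ star Z with hWv
    set Wv' := toE Wv with hWv'
    have hZ'0 : Z' ≠ 0 := by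
      simpa [hZ', htoE] using hZ
    have h0 : 0 < ‖Z'‖ := norm_pos_iff.mpr hZ'0
    have hr : (star Z ⬝ᵥ Z).re = ‖Z'‖ ^ 2 := by
      rw [dotProduct_comm, ← EuclideanSpace.inner_toLp_toLp, ← RCLike.re_to_complex, inner_self_eq_norm_sq]; rfl
    have hconj : ((Z ᵥ* cW) ⬝ᵥ Z).re = ((star Z ᵥ* W) ⬝ᵥ star Z).re := by
      have : (star Z ᵥ* W) ⬝ᵥ star Z = starRingEnd ℂ ((Z ᵥ* cW) ⬝ᵥ Z) := by
        simp only [dotProduct, vecMul, map_sum, _root_.map_mul, Matrix.map_apply, Pi.star_apply,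
          RingHom.coe_coe, starRingEnd_self_apply, hcW]
        simp [Finset.sum_mul, _root_.map_sum, _root_.map_mul]
      rw [this, Complex.conj_re]
    have hinner : (star Z ᵥ* W) ⬝ᵥ star Z = (inner ℂ Z' Wv' : ℂ) := by
      rw [hZ', hWv', htoE]
      show _ = inner ℂ (WithLp.toLp 2 Z) (WithLp.toLp 2 (W *ᵥ star Z))
      rw [EuclideanSpace.inner_toLp_toLp, dotProduct_comm (W *ᵥ star Z), dotProduct_mulVec]
    have hcs : |((Z ᵥ* cW) ⬝ᵥ Z).re| ≤ ‖Z'‖ * ‖Wv'‖ := by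
      rw [hconj, hinner]
      exact (Complex.abs_re_le_norm _).trans
        (norm_inner_le_norm (𝕜 := ℂ) Z' Wv')
    have hposre := hpos.dotProduct_mulVec_pos hZ
    rw [Complex.lt_def] at hposre
    obtain ⟨hposre, -⟩ := hposre
    have hterm : star Z ⬝ᵥ ((W * cW) *ᵥ Z) = star Wv ⬝ᵥ Wv := by
      have e1 : cW *ᵥ Z = star Wv := by
        ext i
        simp [hWv, hcW, mulVec, dotProduct, Matrix.map_apply, map_sum]
      have e2 : star Z ᵥ* W = Wv := by
        have := star_mulVec cW Z
        rw [hherm, e1, star_star] at this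
        exact this.symm
      rw [← mulVec_mulVec, dotProduct_mulVec, e2, e1, dotProduct_comm]
    have hnormWv : (star Wv ⬝ᵥ Wv).re = ‖Wv'‖ ^ 2 := by
      rw [dotProduct_comm, ← EuclideanSpace.inner_toLp_toLp, ← RCLike.re_to_complex, inner_self_eq_norm_sq]; rfl
    have hlt : ‖Wv'‖ ^ 2 < ‖Z'‖ ^ 2 := by
      have : (star Z ⬝ᵥ ((1 - W * cW) *ᵥ Z)).re
          = (star Z ⬝ᵥ Z).re - (star Z ⬝ᵥ ((W * cW) *ᵥ Z)).re := by
        rw [sub_mulVec, one_mulVec, dotProduct_sub, Complex.sub_re]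
      rw [this, hterm, hnormWv, hr] at hposre
      simpa using hposre
    have hWvZ : ‖Wv'‖ < ‖Z'‖ := lt_of_pow_lt_pow_left₀ 2 (norm_nonneg _) hlt
    have hmul : ‖Z'‖ * ‖Wv'‖ < ‖Z'‖ * ‖Z'‖ := mul_lt_mul_of_pos_left hWvZ h0
    have habs := neg_abs_le (((Z ᵥ* cW) ⬝ᵥ Z).re)
    rw [hr]
    nlinarith [hcs, habs]
  have hMrpos : Mr.PosDef := by
    refine Matrix.PosDef.of_dotProduct_mulVec_pos ?_ ?_
    · have h1 : uᵀ = u := by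
        ext i j
        simp only [hu, transpose_apply, Matrix.of_apply]
        rw [show W j i = Wᵀ i j from rfl, hsymm]
      have h2 : vᵀ = v := by
        ext i j
        simp only [hv, transpose_apply, Matrix.of_apply]
        rw [show W j i = Wᵀ i j from rfl, hsymm]
      show Mrᴴ = Mr
      rw [conjTranspose_eq_transpose_of_trivial, hMr, fromBlocks_transpose]
      rw [transpose_add, transpose_one, transpose_sub, transpose_one, h1, h2]
    · intro x hx
      have hZ : φe x ≠ 0 := by
        intro h
        apply hx
        funext p
        cases p with
        | inl i => have := congrFun h i; rw [hφapp] at this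
                   simpa using congrArg Complex.re this
        | inr i => have := congrFun h i; rw [hφapp] at this
                   simpa using congrArg Complex.im this
      have := hqpos (φe x) hZ
      rw [hq x] at this
      simpa using this
  -- Step F : assembling
  calc ∫ Z : Fin n → ℂ, Complex.exp (-(star Z ⬝ᵥ Z)
          - (1 / 2 : ℂ) * ((Z ᵥ* W.map (starRingEnd ℂ)) ⬝ᵥ Z + (star Z ᵥ* W) ⬝ᵥ star Z))
      = ∫ Z : Fin n → ℂ,
          ((Real.exp (-((star Z ⬝ᵥ Z).re + ((Z ᵥ* W.map (starRingEnd ℂ)) ⬝ᵥ Z).re)) : ℝ) : ℂ) := by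
        exact integral_congr_ae (Filter.Eventually.of_forall fun Z => hexp Z)
    _ = ((∫ Z : Fin n → ℂ,
          Real.exp (-((star Z ⬝ᵥ Z).re + ((Z ᵥ* W.map (starRingEnd ℂ)) ⬝ᵥ Z).re)) : ℝ) : ℂ) :=
        integral_ofReal
    _ = ((∫ x : (Fin n ⊕ Fin n) → ℝ,
          Real.exp (-((star (φe x) ⬝ᵥ (φe x)).re
            + (((φe x) ᵥ* W.map (starRingEnd ℂ)) ⬝ᵥ (φe x)).re)) : ℝ) : ℂ) := by
        rw [hφ.integral_comp' (fun Z : Fin n → ℂ =>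
          Real.exp (-((star Z ⬝ᵥ Z).re + ((Z ᵥ* W.map (starRingEnd ℂ)) ⬝ᵥ Z).re)))]
    _ = ((∫ x : (Fin n ⊕ Fin n) → ℝ, Real.exp (-(x ⬝ᵥ Mr *ᵥ x)) : ℝ) : ℂ) := by
        norm_num only [hq]
    _ = ((Real.sqrt π ^ (Fintype.card (Fin n ⊕ Fin n)) / Real.sqrt Mr.det : ℝ) : ℂ) := by
        rw [gauss_int Mr hMrpos]
    _ = (π : ℂ) ^ n / (Real.sqrt ((1 - W * W.map (starRingEnd ℂ)).det.re) : ℂ) := by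
        rw [hdetre]
        have hcard : Fintype.card (Fin n ⊕ Fin n) = 2 * n := by simp [two_mul]
        rw [hcard, pow_mul, Real.sq_sqrt Real.pi_nonneg]
        push_cast
        ring
end
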